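/- arXiv:2504.13520 — 3 statements merged into one kernel-verified Lean document; each statement's English description precedes it below -/
import Mathlib

section
/- Consider the hyper-g/n prior with density p(g) = ((a−2)/(2n)) (1 + g/n)^{−a/2} on g > 0, with a > 2. For any fixed integer c ≥ 1, the integral ∫_0^∞ (1+g)^{c/2} p(g) dg tends to infinity as n → ∞. -/
open Real MeasureTheory Filter

/-- For the hyper-g/n prior `p(g) = ((a−2)/(2n))(1+g/n)^{−a/2}` on `g > 0` with `a > 2`,
and any fixed integer `c ≥ 1`, the integral `∫_0^∞ (1+g)^{c/2} p(g) dg` tends to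
infinity as `n → ∞`. -/
theorem hyper_g_over_n_integral_diverges (a : ℝ) (ha : 2 < a) (c : ℕ) (hc : 1 ≤ c) :
    Tendsto (fun n : ℕ =>
      ∫⁻ g in Set.Ioi (0 : ℝ), ENNReal.ofReal
        ((1 + g) ^ ((c : ℝ) / 2) * ((a - 2) / (2 * (n : ℝ))) *
          (1 + g / (n : ℝ)) ^ (-(a / 2))))
      atTop (nhds ⊤) := by
  set k : ℝ := (a - 2) * (3 : ℝ) ^ (-(a / 2)) / 2 with hk
  have h3 : (0 : ℝ) < (3 : ℝ) ^ (-(a / 2)) := Real.rpow_pos_of_pos (by norm_num) _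
  have hk0 : 0 < k := by
    apply div_pos (mul_pos (by linarith) h3) (by norm_num)
  have hlow : Tendsto (fun n : ℕ => ENNReal.ofReal (k * (n : ℝ) ^ ((1 : ℝ) / 2)))
      atTop (nhds ⊤) := by
    apply ENNReal.tendsto_ofReal_atTop.comp
    exact Tendsto.const_mul_atTop hk0
      ((tendsto_rpow_atTop (by norm_num)).comp tendsto_natCast_atTop_atTop)
  refine tendsto_nhds_top_mono hlow ?_
  filter_upwards [eventually_ge_atTop 1] with n hn
  have hn0 : (0 : ℝ) < (n : ℝ) := by exact_mod_cast hn
  -- lower bound the integral by integrating over `Ioo n (2n)`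
  calc ENNReal.ofReal (k * (n : ℝ) ^ ((1 : ℝ) / 2))
      = ENNReal.ofReal ((n : ℝ) ^ ((1 : ℝ) / 2) * ((a - 2) / (2 * (n : ℝ))) *
          (3 : ℝ) ^ (-(a / 2)) * (n : ℝ)) := by
        congr 1
        field_simp
        ring_nf
        rw [hk]; ring_nf
    _ = ENNReal.ofReal ((n : ℝ) ^ ((1 : ℝ) / 2) * ((a - 2) / (2 * (n : ℝ))) *
          (3 : ℝ) ^ (-(a / 2))) * volume (Set.Ioo (n : ℝ) (2 * n)) := by
        rw [Real.volume_Ioo, ← ENNReal.ofReal_mul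
          (mul_nonneg (mul_nonneg (by positivity) (div_nonneg (by linarith) (by positivity)))
            h3.le)]
        congr 1; ring_nf
    _ = ∫⁻ _ in Set.Ioo (n : ℝ) (2 * n), ENNReal.ofReal ((n : ℝ) ^ ((1 : ℝ) / 2) *
          ((a - 2) / (2 * (n : ℝ))) * (3 : ℝ) ^ (-(a / 2))) := by
        rw [setLIntegral_const]
    _ ≤ ∫⁻ g in Set.Ioo (n : ℝ) (2 * n), ENNReal.ofReal
        ((1 + g) ^ ((c : ℝ) / 2) * ((a - 2) / (2 * (n : ℝ))) *
          (1 + g / (n : ℝ)) ^ (-(a / 2))) := by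
        refine setLIntegral_mono' measurableSet_Ioo fun g hg => ?_
        obtain ⟨hg1, hg2⟩ := hg
        have hg0 : (0 : ℝ) < g := lt_of_lt_of_le hn0 hg1.le
        apply ENNReal.ofReal_le_ofReal
        have h1 : (n : ℝ) ^ ((1 : ℝ) / 2) ≤ (1 + g) ^ ((c : ℝ) / 2) := by
          calc (n : ℝ) ^ ((1 : ℝ) / 2) ≤ (1 + g) ^ ((1 : ℝ) / 2) :=
                Real.rpow_le_rpow hn0.le (by linarith) (by norm_num)
            _ ≤ (1 + g) ^ ((c : ℝ) / 2) := by
                apply Real.rpow_le_rpow_of_exponent_le (by nlinarith)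
                have : (1 : ℝ) ≤ (c : ℝ) := by exact_mod_cast hc
                linarith
        have h2 : (3 : ℝ) ^ (-(a / 2)) ≤ (1 + g / (n : ℝ)) ^ (-(a / 2)) := by
          apply Real.rpow_le_rpow_of_nonpos (by positivity) _ (by linarith)
          have hgn : g / (n : ℝ) ≤ 2 := by rw [div_le_iff₀ hn0]; linarith
          linarith
        have hmid : (0 : ℝ) ≤ (a - 2) / (2 * (n : ℝ)) :=
          div_nonneg (by linarith) (by positivity)
        exact mul_le_mul (mul_le_mul_of_nonneg_right h1 hmid) h2 h3.le
          (mul_nonneg (by positivity) hmid)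
    _ ≤ ∫⁻ g in Set.Ioi (0 : ℝ), ENNReal.ofReal
        ((1 + g) ^ ((c : ℝ) / 2) * ((a - 2) / (2 * (n : ℝ))) *
          (1 + g / (n : ℝ)) ^ (-(a / 2))) := by
        apply lintegral_mono_set
        intro g hg
        exact lt_trans hn0 hg.1
end

section
/- Define B_Σ = I_l + (1/σ_{y|x}) Σ_yx^⊤ Σ_yx Σ_xx^{-1} and A_Σ = ((I_l + g^{-1} B_Σ^{-1})^{-1})^⊤ Σ_xx^{-1} B_Σ, where Σ_xx is symmetric positive definite, σ_{y|x} > 0, Σ_yx is a 1×l row vector, and g > 0. Then A_Σ is symmetric positive semidefinite. -/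
open Matrix

private lemma psd_smul {n : ℕ} {M : Matrix (Fin n) (Fin n) ℝ} (hM : M.PosSemidef)
    {c : ℝ} (hc : 0 ≤ c) : (c • M).PosSemidef := by
  constructor
  · rw [Matrix.IsHermitian, conjTranspose_smul, hM.1.eq, star_trivial]
  · intro x
    have := hM.2 x
    convert mul_nonneg hc this using 1
    simp only [Finsupp.mul_sum, Matrix.smul_apply, smul_eq_mul, star_trivial]
    exact Finsupp.sum_congr fun i _ => Finsupp.sum_congr fun j _ => by ring

/-- With `B_Σ = I + (1/σ_{y|x}) Σyxᵀ Σyx Σxx⁻¹` and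
`A_Σ = ((I + g⁻¹ B_Σ⁻¹)⁻¹)ᵀ Σxx⁻¹ B_Σ`, where `Σxx` is symmetric positive definite,
`σ_{y|x} > 0` and `g > 0`, the matrix `A_Σ` is symmetric positive semidefinite. -/
theorem A_Sigma_posSemidef (l : ℕ)
    (Sxx : Matrix (Fin l) (Fin l) ℝ) (hxx : Sxx.PosDef)
    (Syx : Matrix (Fin 1) (Fin l) ℝ) (σ g : ℝ) (hσ : 0 < σ) (hg : 0 < g)
    (B A : Matrix (Fin l) (Fin l) ℝ)
    (hB : B = 1 + (1 / σ) • (Syxᵀ * Syx * Sxx⁻¹))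
    (hA : A = ((1 + g⁻¹ • B⁻¹)⁻¹)ᵀ * Sxx⁻¹ * B) :
    A.PosSemidef := by
  have hxxu : IsUnit Sxx.det := isUnit_iff_ne_zero.mpr hxx.det_pos.ne'
  have hxxinv : (Sxx⁻¹).PosDef := hxx.inv
  have hxxsym : (Sxx⁻¹)ᵀ = Sxx⁻¹ := by
    rw [← conjTranspose_eq_transpose_of_trivial]; exact hxxinv.isHermitian.eq
  -- the rank-one part is positive semidefinite
  set R : Matrix (Fin 1) (Fin l) ℝ := Syx * Sxx⁻¹ with hR
  have hRt : Rᵀ = Sxx⁻¹ * Syxᵀ := by rw [hR, transpose_mul, hxxsym]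
  have hQ : ((1/σ) • (Rᵀ * R)).PosSemidef := by
    refine psd_smul ?_ (by positivity)
    have := posSemidef_conjTranspose_mul_self R
    rwa [conjTranspose_eq_transpose_of_trivial] at this
  -- S = Sxx⁻¹ * B is positive definite
  have hSB : Sxx⁻¹ * B = Sxx⁻¹ + (1/σ) • (Rᵀ * R) := by
    rw [hB, hRt, hR, Matrix.mul_add, Matrix.mul_one, Matrix.mul_smul]
    simp [Matrix.mul_assoc]
  have hS : (Sxx⁻¹ * B).PosDef := by
    rw [hSB]; exact hxxinv.add_posSemidef hQ
  -- B is invertible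
  have hBu : IsUnit B.det := by
    have : B = Sxx * (Sxx⁻¹ * B) := by
      rw [← Matrix.mul_assoc, Matrix.mul_nonsing_inv _ hxxu, Matrix.one_mul]
    rw [this, det_mul]
    exact hxxu.mul (isUnit_iff_ne_zero.mpr hS.det_pos.ne')
  -- M = Sxx⁻¹ * B + g⁻¹ • Sxx⁻¹ is positive definite
  set M : Matrix (Fin l) (Fin l) ℝ := Sxx⁻¹ * B + g⁻¹ • Sxx⁻¹ with hM
  have hMpd : M.PosDef := by
    rw [hM, add_comm]
    exact Matrix.PosDef.posSemidef_add (psd_smul hxxinv.posSemidef (by positivity)) hS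
  -- D = 1 + g⁻¹ • B⁻¹ is invertible
  set D : Matrix (Fin l) (Fin l) ℝ := 1 + g⁻¹ • B⁻¹ with hD
  have hBD : B * D = Sxx * M := by
    rw [hD, hM, Matrix.mul_add, Matrix.mul_one, Matrix.mul_smul,
      Matrix.mul_nonsing_inv _ hBu, Matrix.mul_add, ← Matrix.mul_assoc,
      Matrix.mul_nonsing_inv _ hxxu, Matrix.one_mul, Matrix.mul_smul,
      Matrix.mul_nonsing_inv _ hxxu]
  have hDu : IsUnit D.det := by
    have : D = B⁻¹ * (Sxx * M) := by
      rw [← hBD, ← Matrix.mul_assoc, Matrix.nonsing_inv_mul _ hBu, Matrix.one_mul]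
    rw [this, det_mul, det_mul]
    exact (Matrix.isUnit_nonsing_inv_det B hBu).mul <| hxxu.mul
      (isUnit_iff_ne_zero.mpr hMpd.det_pos.ne')
  -- key rewriting : A = (D⁻¹)ᴴ * M * D⁻¹
  have hMD : M * D⁻¹ = Sxx⁻¹ * B := by
    have : M = Sxx⁻¹ * B * D := by
      rw [Matrix.mul_assoc, hBD, ← Matrix.mul_assoc,
        Matrix.nonsing_inv_mul _ hxxu, Matrix.one_mul]
    rw [this, Matrix.mul_assoc, Matrix.mul_nonsing_inv _ hDu, Matrix.mul_one]
  have hAeq : A = (D⁻¹)ᴴ * M * D⁻¹ := by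
    rw [hA, conjTranspose_eq_transpose_of_trivial, Matrix.mul_assoc, Matrix.mul_assoc, hMD]
  rw [hAeq]
  exact hMpd.posSemidef.conjTranspose_mul_mul_same D⁻¹
end

section
/- Under the model prior with independent Beta-binomial inclusion for outcome and treatment models with p candidate variables and uniform prior on model size for each, the induced prior probability that the number of valid and relevant instruments N_Z (variables in the treatment model but not in the outcome model) equals k is p(N_Z=k) = (1/(p+1)) Σ_{p_i=0}^{p} Σ_{m=0}^{p_i} 1{0 ≤ k ≤ p−p_i} C(p_i, p_i−m) C(p−p_i, k) Γ(1+p_i+k−m)Γ(1+p−p_i−k+m)/Γ(p+2), and these probabilities sum to 1 over k = 0,…,p. -/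
open Finset

lemma sum_decomp {α : Type*} [Fintype α] [DecidableEq α] (L : Finset α) (G : Finset α → ℝ) :
    ∑ M : Finset α, G M = ∑ A ∈ L.powerset, ∑ B ∈ Lᶜ.powerset, G (A ∪ B) := by
  rw [← Finset.sum_product']
  refine (Finset.sum_bij' (fun x _ => x.1 ∪ x.2) (fun M _ => (M ∩ L, M \ L)) ?_ ?_ ?_ ?_ ?_).symm
  · intro a ha; exact Finset.mem_univ _
  · intro M _
    simp only [Finset.mem_product, Finset.mem_powerset]
    refine ⟨Finset.inter_subset_right, fun x hx => ?_⟩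
    simp only [Finset.mem_sdiff] at hx
    simp [hx.2]
  · intro a ha
    simp only [Finset.mem_product, Finset.mem_powerset] at ha
    obtain ⟨h1, h2⟩ := ha
    have hA : (a.1 ∪ a.2) ∩ L = a.1 := by
      ext x
      simp only [Finset.mem_inter, Finset.mem_union]
      constructor
      · rintro ⟨h | h, hL⟩
        · exact h
        · exact absurd hL (by simpa using h2 h)
      · intro h; exact ⟨Or.inl h, h1 h⟩
    have hB : (a.1 ∪ a.2) \ L = a.2 := by
      ext x
      simp only [Finset.mem_sdiff, Finset.mem_union]
      constructor
      · rintro ⟨h | h, hL⟩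
        · exact absurd (h1 h) hL
        · exact h
      · intro h; exact ⟨Or.inr h, by simpa using h2 h⟩
    exact Prod.ext hA hB
  · intro M _
    exact (Finset.union_comm _ _).trans (Finset.sdiff_union_inter M L)
  · intro a ha; rfl

/-- Group a sum over all subsets by cardinality. -/

lemma sum_powerset_card {α : Type*} (s : Finset α) (g : ℕ → ℝ) :
    ∑ A ∈ s.powerset, g A.card
      = ∑ a ∈ Finset.range (s.card + 1), (s.card.choose a : ℝ) * g a := by
  rw [Finset.sum_powerset]
  refine Finset.sum_congr rfl fun a _ => ?_
  rw [Finset.sum_congr rfl (fun S hS => by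
    rw [(Finset.mem_powersetCard.mp hS).2]), Finset.sum_const,
    Finset.card_powersetCard, nsmul_eq_mul]

lemma key_sum (p k : ℕ) (prior : Finset (Fin p) → ℝ)
    (hprior : ∀ S, prior S = 1 / (((p : ℝ) + 1) * (p.choose S.card))) (L : Finset (Fin p)) :
    (∑ M : Finset (Fin p), if (M \ L).card = k then prior M else 0)
    = ∑ m ∈ Finset.range (L.card + 1),
        (if k ≤ p - L.card then
          (((L.card.choose (L.card - m)) * ((p - L.card).choose k) *
            (L.card + k - m).factorial * (p - L.card - k + m).factorial : ℕ) : ℝ) /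
            ((p + 1).factorial : ℝ) else 0) := by
  set pi := L.card with hpidef
  have hpi : pi ≤ p := by
    simpa using Finset.card_le_univ L
  have hcompl : Lᶜ.card = p - pi := by simp [Finset.card_compl, hpidef]
  have hp1 : ((p : ℝ) + 1) ≠ 0 := by positivity
  rw [sum_decomp L]
  have step1 : ∀ A ∈ L.powerset, ∀ B ∈ Lᶜ.powerset,
      (if ((A ∪ B) \ L).card = k then prior (A ∪ B) else 0)
      = (if B.card = k then 1 / (((p:ℝ)+1) * (p.choose (A.card + B.card))) else 0) := by
    intro A hA B hB
    rw [Finset.mem_powerset] at hA hB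
    have hd : Disjoint B L := Finset.disjoint_left.mpr fun a ha => by
      simpa using hB ha
    have hAB : Disjoint A B := (hd.mono_right hA).symm
    have h1 : (A ∪ B) \ L = B := by
      rw [Finset.union_sdiff_distrib, Finset.sdiff_eq_empty_iff_subset.mpr hA,
        Finset.empty_union, Finset.sdiff_eq_self_of_disjoint hd]
    have h2 : (A ∪ B).card = A.card + B.card := Finset.card_union_of_disjoint hAB
    rw [h1, hprior, h2]
  rw [Finset.sum_congr rfl fun A hA => Finset.sum_congr rfl fun B hB => step1 A hA B hB]
  have stepB : ∀ a : ℕ,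
      (∑ B ∈ Lᶜ.powerset, if B.card = k then 1 / (((p:ℝ)+1) * (p.choose (a + B.card))) else 0)
      = if k ≤ p - pi then ((p - pi).choose k : ℝ) * (1 / (((p:ℝ)+1) * (p.choose (a + k)))) else 0 := by
    intro a
    rw [sum_powerset_card Lᶜ (fun n => if n = k then 1 / (((p:ℝ)+1) * (p.choose (a + n))) else 0),
      hcompl]
    rw [Finset.sum_congr rfl fun b _ => by
      rw [mul_ite, mul_zero]]
    rw [Finset.sum_ite_eq']
    simp [Nat.lt_succ_iff]
  rw [Finset.sum_congr rfl fun A _ => stepB A.card]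
  rw [sum_powerset_card L (fun a => if k ≤ p - pi then ((p - pi).choose k : ℝ) * (1 / (((p:ℝ)+1) * (p.choose (a + k)))) else 0)]
  rw [← Finset.sum_range_reflect]
  refine Finset.sum_congr rfl fun a ha => ?_
  rw [Finset.mem_range, Nat.lt_succ_iff] at ha
  rw [show pi + 1 - 1 - a = pi - a from by omega]
  by_cases hk : k ≤ p - pi
  · simp only [hk, if_true]
    rw [show pi + k - a = (pi - a) + k from by omega,
        show p - pi - k + a = p - ((pi - a) + k) from by omega]
    have hak : (pi - a) + k ≤ p := by omega
    have hc : (p.choose ((pi - a) + k) : ℝ) ≠ 0 :=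
      Nat.cast_ne_zero.mpr (Nat.choose_pos hak).ne'
    have hfactne : ((p + 1).factorial : ℝ) ≠ 0 := by positivity
    have hid : ((p.choose ((pi - a) + k) : ℝ)) * (((pi - a) + k).factorial : ℝ)
        * ((p - ((pi - a) + k)).factorial : ℝ) = (p.factorial : ℝ) := by
      exact_mod_cast congrArg (Nat.cast (R := ℝ)) (Nat.choose_mul_factorial_mul_factorial hak)
    have hfs : (((p + 1).factorial : ℕ) : ℝ) = ((p : ℝ) + 1) * (p.factorial : ℝ) := by
      rw [Nat.factorial_succ]; push_cast; ring
    have hn1 : (((pi - a) + k).factorial : ℝ) ≠ 0 :=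
      Nat.cast_ne_zero.mpr (Nat.factorial_ne_zero _)
    have hn2 : ((p - ((pi - a) + k)).factorial : ℝ) ≠ 0 :=
      Nat.cast_ne_zero.mpr (Nat.factorial_ne_zero _)
    have hmain : (1:ℝ)/(((p:ℝ)+1) * (p.choose ((pi - a) + k)))
        = ((((pi - a) + k).factorial:ℝ) * ((p - ((pi - a) + k)).factorial:ℝ))
          /(((p+1).factorial : ℕ):ℝ) := by
      rw [hfs, ← hid]
      field_simp
    rw [hmain]
    push_cast
    ring
  · simp [hk]

/-- Under independent Beta-binomial (uniform-on-model-size) priors on the outcome model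
`L` and the treatment model `M`, the induced prior on the number
`N_Z = |M \ L|` of valid and relevant instruments is
`p(N_Z = k) = (1/(p+1)) Σ_{p_i=0}^{p} Σ_{m=0}^{p_i} 1{k ≤ p−p_i} C(p_i, p_i−m) C(p−p_i, k)
  (p_i+k−m)! (p−p_i−k+m)! / (p+1)!`, and these probabilities sum to one. -/
theorem instrument_number_prior (p : ℕ)
    (prior : Finset (Fin p) → ℝ)
    (hprior : ∀ S, prior S = 1 / (((p : ℝ) + 1) * (p.choose S.card)))
    (f : ℕ → ℝ)
    (hf : ∀ k, f k = (1 / ((p : ℝ) + 1)) *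
      ∑ pi ∈ Finset.range (p + 1), ∑ m ∈ Finset.range (pi + 1),
        (if k ≤ p - pi then
          (((pi.choose (pi - m)) * ((p - pi).choose k) *
            (pi + k - m).factorial * (p - pi - k + m).factorial : ℕ) : ℝ) /
            ((p + 1).factorial : ℝ)
        else 0)) :
    (∀ k, (∑ L : Finset (Fin p), ∑ M : Finset (Fin p),
        if (M \ L).card = k then prior L * prior M else 0) = f k)
    ∧ ∑ k ∈ Finset.range (p + 1), f k = 1 := by
  have hp1 : ((p : ℝ) + 1) ≠ 0 := by positivity
  have hcu : (Finset.univ : Finset (Fin p)).card = p := by simp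
  have part1 : ∀ k, (∑ L : Finset (Fin p), ∑ M : Finset (Fin p),
      if (M \ L).card = k then prior L * prior M else 0) = f k := by
    intro k
    rw [hf k]
    rw [Finset.sum_congr rfl fun L _ => show
        (∑ M : Finset (Fin p), if (M \ L).card = k then prior L * prior M else 0)
          = prior L * ∑ M : Finset (Fin p), (if (M \ L).card = k then prior M else 0) by
      rw [Finset.mul_sum]
      exact Finset.sum_congr rfl fun M _ => by rw [mul_ite, mul_zero]]
    rw [Finset.sum_congr rfl fun L (_ : L ∈ Finset.univ) => by
      rw [key_sum p k prior hprior L, hprior L]]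
    rw [← Finset.powerset_univ,
      sum_powerset_card (Finset.univ : Finset (Fin p)) (fun pi =>
        1 / (((p : ℝ) + 1) * (p.choose pi)) *
          ∑ m ∈ Finset.range (pi + 1),
            (if k ≤ p - pi then
              (((pi.choose (pi - m)) * ((p - pi).choose k) *
                (pi + k - m).factorial * (p - pi - k + m).factorial : ℕ) : ℝ) /
                ((p + 1).factorial : ℝ) else 0)), hcu, Finset.mul_sum]
    refine Finset.sum_congr rfl fun pi hpi => ?_
    rw [Finset.mem_range, Nat.lt_succ_iff] at hpi
    have hch : (p.choose pi : ℝ) ≠ 0 := Nat.cast_ne_zero.mpr (Nat.choose_pos hpi).ne'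
    have h2 : (p.choose pi : ℝ) * (1 / (((p : ℝ) + 1) * (p.choose pi))) = 1 / ((p : ℝ) + 1) := by
      field_simp
    rw [← mul_assoc, h2]
  refine ⟨part1, ?_⟩
  rw [Finset.sum_congr rfl fun k _ => (part1 k).symm, Finset.sum_comm]
  rw [Finset.sum_congr rfl fun L _ => Finset.sum_comm]
  have hsum1 : ∀ L M : Finset (Fin p),
      (∑ k ∈ Finset.range (p + 1), if (M \ L).card = k then prior L * prior M else 0)
        = prior L * prior M := by
    intro L M
    rw [Finset.sum_ite_eq, if_pos]
    rw [Finset.mem_range, Nat.lt_succ_iff]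
    simpa using Finset.card_le_univ (M \ L)
  rw [Finset.sum_congr rfl fun L _ => Finset.sum_congr rfl fun M _ => hsum1 L M]
  have hone : (∑ S : Finset (Fin p), prior S) = 1 := by
    rw [Finset.sum_congr rfl fun S _ => hprior S, ← Finset.powerset_univ,
      sum_powerset_card (Finset.univ : Finset (Fin p))
        (fun n => 1 / (((p : ℝ) + 1) * (p.choose n))), hcu]
    rw [Finset.sum_congr rfl fun pi hpi => show
        (p.choose pi : ℝ) * (1 / (((p : ℝ) + 1) * (p.choose pi))) = 1 / ((p : ℝ) + 1) by
      have hch : (p.choose pi : ℝ) ≠ 0 := Nat.cast_ne_zero.mpr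
        (Nat.choose_pos (Nat.lt_succ_iff.mp (Finset.mem_range.mp hpi))).ne'
      field_simp]
    rw [Finset.sum_const, Finset.card_range, nsmul_eq_mul]
    push_cast
    field_simp
  calc (∑ L : Finset (Fin p), ∑ M : Finset (Fin p), prior L * prior M)
      = (∑ L : Finset (Fin p), prior L) * (∑ M : Finset (Fin p), prior M) := by
        rw [Finset.sum_mul]
        exact Finset.sum_congr rfl fun L _ => by rw [Finset.mul_sum]
    _ = 1 := by rw [hone, one_mul]
end
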